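/- arXiv:2007.02682 — 2 statements merged into one kernel-verified Lean document; each statement's English description precedes it below -/
import Mathlib

section
/- Let H be a Hermitian matrix with spectral decomposition H = Σ_j λ_j |λ_j⟩⟨λ_j|, and let |A⟩, |B⟩ be unit vectors. If there exist t₀ > 0 and a phase φ such that exp(-iHt₀)|A⟩ = e^{iφ}|B⟩, then for all j, |⟨λ_j|A⟩| = |⟨λ_j|B⟩|, and for all j with ⟨λ_j|A⟩ ≠ 0, λ_j t₀ + φ + arg(⟨λ_j|B⟩/⟨λ_j|A⟩) ∈ 2πℤ. -/
open Matrix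

lemma exp_mulVec_eig {n : ℕ} (M : Matrix (Fin n) (Fin n) ℂ) (w : Fin n → ℂ) (μ : ℂ)
    (h : M.mulVec w = μ • w) :
    (NormedSpace.exp M).mulVec w = Complex.exp μ • w := by
  letI : NormedRing (Matrix (Fin n) (Fin n) ℂ) := Matrix.linftyOpNormedRing
  letI : NormedAlgebra ℂ (Matrix (Fin n) (Fin n) ℂ) := Matrix.linftyOpNormedAlgebra
  have hpow : ∀ k : ℕ, (M ^ k).mulVec w = μ ^ k • w := by
    intro k
    induction k with
    | zero => simp
    | succ k ih =>
      rw [pow_succ', ← Matrix.mulVec_mulVec, ih, Matrix.mulVec_smul, h,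
        smul_smul, ← pow_succ]
  let L : Matrix (Fin n) (Fin n) ℂ →L[ℂ] (Fin n → ℂ) :=
    LinearMap.toContinuousLinearMap
      { toFun := fun N => N.mulVec w
        map_add' := fun N N' => Matrix.add_mulVec N N' w
        map_smul' := fun c N => Matrix.smul_mulVec c N w }
  have hL : ∀ N : Matrix (Fin n) (Fin n) ℂ, L N = N.mulVec w := fun _ => rfl
  have hsum := NormedSpace.expSeries_summable' (𝕂 := ℂ) M
  have hexp := congrFun (NormedSpace.exp_eq_tsum (𝕂 := ℂ) (𝔸 := ℂ)) μ
  calc (NormedSpace.exp M).mulVec w = L (∑' k : ℕ, (k.factorial : ℂ)⁻¹ • M ^ k) := by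
        rw [hL, NormedSpace.exp_eq_tsum ℂ]
    _ = ∑' k : ℕ, (k.factorial : ℂ)⁻¹ • (M ^ k).mulVec w := by
        rw [L.map_tsum hsum]
        simp [hL, Matrix.smul_mulVec]
    _ = ∑' k : ℕ, ((k.factorial : ℂ)⁻¹ • μ ^ k) • w := by
        simp_rw [hpow, smul_smul, smul_eq_mul]
    _ = (∑' k : ℕ, (k.factorial : ℂ)⁻¹ • μ ^ k) • w := by
        rw [(NormedSpace.expSeries_summable' (𝕂 := ℂ) μ).tsum_smul_const]
    _ = Complex.exp μ • w := by
        rw [← hexp, Complex.exp_eq_exp_ℂ]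


/-- Necessity direction of the spectral characterization of perfect state transfer:
if `exp(-iHt₀)|A⟩ = e^{iφ}|B⟩` for a Hermitian `H` with orthonormal eigenbasis `v` and
eigenvalues `lam`, then `|⟨λ_j|A⟩| = |⟨λ_j|B⟩|` for all `j`, and for all `j` with
`⟨λ_j|A⟩ ≠ 0`, `λ_j t₀ + φ + arg(⟨λ_j|B⟩/⟨λ_j|A⟩) ∈ 2πℤ`. -/
theorem pst_necessity {n : ℕ} (H : Matrix (Fin n) (Fin n) ℂ) (hH : H.IsHermitian)
    (lam : Fin n → ℝ) (v : Fin n → Fin n → ℂ)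
    (hortho : ∀ j k, star (v j) ⬝ᵥ v k = if j = k then 1 else 0)
    (heig : ∀ j, H.mulVec (v j) = (lam j : ℂ) • v j)
    (A B : Fin n → ℂ) (hA : star A ⬝ᵥ A = 1) (hB : star B ⬝ᵥ B = 1)
    (t₀ : ℝ) (ht₀ : 0 < t₀) (φ : ℝ)
    (hPST : (NormedSpace.exp ((-(Complex.I * t₀)) • H)).mulVec A
      = Complex.exp (Complex.I * φ) • B) :
    (∀ j, ‖star (v j) ⬝ᵥ A‖ = ‖star (v j) ⬝ᵥ B‖) ∧
    (∀ j, star (v j) ⬝ᵥ A ≠ 0 → ∃ m : ℤ,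
      lam j * t₀ + φ + Complex.arg ((star (v j) ⬝ᵥ B) / (star (v j) ⬝ᵥ A))
        = 2 * Real.pi * m) := by
  set c : ℂ := -(Complex.I * t₀) with hc
  set M := NormedSpace.exp (c • H) with hM
  have key : ∀ j, Complex.exp (c * lam j) * (star (v j) ⬝ᵥ A)
      = Complex.exp (Complex.I * φ) * (star (v j) ⬝ᵥ B) := by
    intro j
    have hMH : Mᴴ = NormedSpace.exp ((Complex.I * t₀) • H) := by
      rw [hM, ← Matrix.exp_conjTranspose, Matrix.conjTranspose_smul, hH.eq]
      congr 1
      simp [hc]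
    have hMHv : Mᴴ.mulVec (v j) = Complex.exp (Complex.I * t₀ * lam j) • v j := by
      rw [hMH]
      apply exp_mulVec_eig
      rw [Matrix.smul_mulVec, heig, smul_smul]
    have hvm : star (v j) ᵥ* M = star (Mᴴ.mulVec (v j)) := by
      rw [Matrix.star_mulVec, Matrix.conjTranspose_conjTranspose]
    have h1 := congrArg (fun x => star (v j) ⬝ᵥ x) hPST
    beta_reduce at h1
    rw [Matrix.dotProduct_mulVec, hvm, hMHv, star_smul, smul_dotProduct,
      dotProduct_smul] at h1
    have hstar : star (Complex.exp (Complex.I * ↑t₀ * ↑(lam j)))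
        = Complex.exp (c * ↑(lam j)) := by
      rw [Complex.star_def, ← Complex.exp_conj]
      congr 1
      simp only [hc, _root_.map_mul, Complex.conj_I, Complex.conj_ofReal]
      ring
    rw [hstar] at h1
    simpa [smul_eq_mul] using h1
  have habs : ∀ j, ‖star (v j) ⬝ᵥ A‖ = ‖star (v j) ⬝ᵥ B‖ := by
    intro j
    have := congrArg norm (key j)
    simpa [Complex.norm_exp, hc, Complex.mul_re] using this
  refine ⟨habs, ?_⟩
  intro j haj
  have hbj : star (v j) ⬝ᵥ B ≠ 0 := by
    intro h0
    apply haj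
    have := habs j
    rw [h0, norm_zero, norm_eq_zero] at this
    exact this
  have hb : star (v j) ⬝ᵥ B
      = Complex.exp (c * ↑(lam j) - Complex.I * ↑φ) * (star (v j) ⬝ᵥ A) := by
    rw [Complex.exp_sub, div_mul_eq_mul_div, key j, mul_comm, mul_div_assoc,
      div_self (Complex.exp_ne_zero _), mul_one]
  have hdiv : (star (v j) ⬝ᵥ B) / (star (v j) ⬝ᵥ A)
      = Complex.exp (-(↑(lam j * t₀ + φ)) * Complex.I) := by
    rw [hb, mul_div_assoc, div_self haj, mul_one]
    congr 1
    simp only [hc]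
    push_cast
    ring
  have habs1 : ‖(star (v j) ⬝ᵥ B) / (star (v j) ⬝ᵥ A)‖ = 1 := by
    rw [norm_div, ← habs j, div_self (by simpa using haj)]
  have hargexp : Complex.exp ((Complex.arg ((star (v j) ⬝ᵥ B) / (star (v j) ⬝ᵥ A)) : ℂ) * Complex.I) = (star (v j) ⬝ᵥ B) / (star (v j) ⬝ᵥ A) := by
    have := Complex.norm_mul_exp_arg_mul_I ((star (v j) ⬝ᵥ B) / (star (v j) ⬝ᵥ A))
    rwa [habs1, Complex.ofReal_one, one_mul] at this
  have hone : Complex.exp ((↑(lam j * t₀ + φ + Complex.arg ((star (v j) ⬝ᵥ B) / (star (v j) ⬝ᵥ A)))) * Complex.I) = 1 := by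
    push_cast
    rw [add_mul, Complex.exp_add, hargexp, hdiv, ← Complex.exp_add]
    push_cast
    ring_nf
    exact Complex.exp_zero
  rw [Complex.exp_eq_one_iff] at hone
  obtain ⟨m, hm⟩ := hone
  refine ⟨m, ?_⟩
  have : ((lam j * t₀ + φ + Complex.arg ((star (v j) ⬝ᵥ B) / (star (v j) ⬝ᵥ A)) : ℝ) : ℂ) = ((2 * Real.pi * m : ℝ) : ℂ) := by
    apply mul_right_cancel₀ Complex.I_ne_zero
    rw [hm]
    push_cast
    ring
  exact_mod_cast this
end

section
/- Let H be a real symmetric matrix and |A⟩, |B⟩, |C⟩ distinct standard basis vectors. Suppose t_AB > 0 is the minimal time with |⟨B|exp(-iHt_AB)|A⟩| = 1. Then there is no time t_AC with 0 < t_AC < t_AB such that |⟨C|exp(-iHt_AC)|A⟩| = 1. -/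
open Matrix

noncomputable def Umat {n : ℕ} (H : Matrix (Fin n) (Fin n) ℝ) (t : ℝ) :
    Matrix (Fin n) (Fin n) ℂ :=
  NormedSpace.exp ((-(Complex.I * t)) • H.map (fun x => (x : ℂ)))

lemma Umat_add {n : ℕ} (H : Matrix (Fin n) (Fin n) ℝ) (s t : ℝ) :
    Umat H (s + t) = Umat H s * Umat H t := by
  unfold Umat
  rw [← Matrix.exp_add_of_commute]
  · congr 1
    rw [← add_smul]
    congr 1
    push_cast
    ring
  · exact ((Commute.refl _).smul_left _).smul_right _

lemma Umat_zero {n : ℕ} (H : Matrix (Fin n) (Fin n) ℝ) : Umat H 0 = 1 := by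
  unfold Umat
  simp [NormedSpace.exp_zero]

lemma Umat_symm {n : ℕ} (H : Matrix (Fin n) (Fin n) ℝ) (hsymm : H.IsSymm) (t : ℝ) :
    (Umat H t)ᵀ = Umat H t := by
  unfold Umat
  rw [← Matrix.exp_transpose]
  congr 1
  rw [transpose_smul, ← Matrix.transpose_map, hsymm]

lemma Umat_unitary {n : ℕ} (H : Matrix (Fin n) (Fin n) ℝ) (hsymm : H.IsSymm) (t : ℝ) :
    (Umat H t)ᴴ * Umat H t = 1 := by
  have h1 : (Umat H t)ᴴ = Umat H (-t) := by
    unfold Umat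
    rw [← Matrix.exp_conjTranspose]
    congr 1
    rw [conjTranspose_smul]
    congr 1
    · simp [Complex.star_def]
    · ext i j
      simp only [conjTranspose_apply, Matrix.map_apply, RCLike.star_def, Complex.conj_ofReal,
        Complex.ofReal_inj]
      exact congrFun (congrFun hsymm i) j
  rw [h1, ← Umat_add, neg_add_cancel, Umat_zero]

/-- Column of a unitary matrix with a unimodular entry vanishes elsewhere. -/
lemma col_zero {n : ℕ} (U : Matrix (Fin n) (Fin n) ℂ) (hU : Uᴴ * U = 1)
    (a j₀ : Fin n) (h1 : ‖U j₀ a‖ = 1) :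
    ∀ j, j ≠ j₀ → U j a = 0 := by
  have hentry : ((Uᴴ * U) a a : ℂ) = 1 := by rw [hU]; simp [Matrix.one_apply_eq]
  have hsum : ∑ j, Complex.normSq (U j a) = 1 := by
    have : ((∑ j, Complex.normSq (U j a) : ℝ) : ℂ) = 1 := by
      rw [← hentry, Matrix.mul_apply]
      push_cast
      refine Finset.sum_congr rfl fun j _ => ?_
      rw [Matrix.conjTranspose_apply]
      simp [Complex.normSq_eq_conj_mul_self, RCLike.star_def]
    exact_mod_cast this
  have hj₀ : Complex.normSq (U j₀ a) = 1 := by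
    rw [← Complex.sq_norm, h1]; norm_num
  have hrest : ∑ j ∈ Finset.univ.erase j₀, Complex.normSq (U j a) = 0 := by
    have h := Finset.add_sum_erase Finset.univ (fun j => Complex.normSq (U j a))
      (Finset.mem_univ j₀)
    simp only [hsum, hj₀] at h
    linarith
  intro j hj
  have hz : Complex.normSq (U j a) = 0 := by
    have hnn : ∀ i ∈ Finset.univ.erase j₀, 0 ≤ Complex.normSq (U i a) :=
      fun i _ => Complex.normSq_nonneg _
    have := (Finset.sum_eq_zero_iff_of_nonneg hnn).mp hrest j
      (Finset.mem_erase.mpr ⟨hj, Finset.mem_univ j⟩)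
    exact this
  exact Complex.normSq_eq_zero.mp hz

lemma mul_apply_single {n : ℕ} (X Y : Matrix (Fin n) (Fin n) ℂ) (i j k₀ : Fin n)
    (hY : ∀ k, k ≠ k₀ → Y k j = 0) : (X * Y) i j = X i k₀ * Y k₀ j := by
  rw [Matrix.mul_apply]
  refine Finset.sum_eq_single k₀ (fun k _ hk => by rw [hY k hk, mul_zero]) (by simp)

/-- Impossibility of routing for real Hamiltonians: if `t_AB > 0` is the minimal time with
perfect state transfer from vertex `a` to vertex `b`, then there is no earlier time
`0 < t < t_AB` at which there is perfect state transfer from `a` to a third vertex `c`. -/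
theorem no_routing_real_hamiltonian {n : ℕ} (H : Matrix (Fin n) (Fin n) ℝ) (hsymm : H.IsSymm)
    (a b c : Fin n) (hab : a ≠ b) (hac : a ≠ c) (hbc : b ≠ c)
    (tAB : ℝ) (htAB : 0 < tAB)
    (hPST : ‖(NormedSpace.exp
        ((-(Complex.I * tAB)) • H.map (fun x => (x : ℂ)))) b a‖ = 1)
    (hmin : ∀ t : ℝ, 0 < t →
      ‖(NormedSpace.exp
        ((-(Complex.I * t)) • H.map (fun x => (x : ℂ)))) b a‖ = 1 → tAB ≤ t) :
    ¬ ∃ t : ℝ, 0 < t ∧ t < tAB ∧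
      ‖(NormedSpace.exp
        ((-(Complex.I * t)) • H.map (fun x => (x : ℂ)))) c a‖ = 1 := by
  rintro ⟨t, ht0, httAB, hC⟩
  have hPST' : ‖Umat H tAB b a‖ = 1 := hPST
  have hC' : ‖Umat H t c a‖ = 1 := hC
  have hmin' : ∀ s : ℝ, 0 < s → ‖Umat H s b a‖ = 1 → tAB ≤ s := hmin
  have hUt := Umat_unitary H hsymm t
  have hUAB := Umat_unitary H hsymm tAB
  -- symmetry of entries
  have hsyT := Umat_symm H hsymm t
  have hACsym : Umat H t a c = Umat H t c a :=
    (congrFun (congrFun hsyT a) c).symm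
  have hACabs : ‖Umat H t a c‖ = 1 := by rw [hACsym]; exact hC'
  have colA_t : ∀ j, j ≠ c → Umat H t j a = 0 := col_zero _ hUt a c hC'
  have colC_t : ∀ j, j ≠ a → Umat H t j c = 0 := col_zero _ hUt c a hACabs
  have colA_AB : ∀ j, j ≠ b → Umat H tAB j a = 0 := col_zero _ hUAB a b hPST'
  rcases lt_trichotomy (2 * t) tAB with hlt | heq | hgt
  · -- tAB = (tAB - 2t) + t + t
    set s := tAB - 2 * t with hs
    have hs0 : 0 < s := by linarith
    have e1 : Umat H tAB = Umat H s * Umat H t * Umat H t := by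
      rw [← Umat_add, ← Umat_add]
      congr 1
      ring
    have e2 : Umat H tAB b a = (Umat H s * Umat H t) b c * Umat H t c a := by
      rw [e1]; exact mul_apply_single _ _ _ _ _ colA_t
    have e3 : (Umat H s * Umat H t) b c = Umat H s b a * Umat H t a c :=
      mul_apply_single _ _ _ _ _ colC_t
    have habs : ‖Umat H s b a‖ = 1 := by
      have := hPST'
      rw [e2, e3, norm_mul, norm_mul, hACabs, hC'] at this
      simpa using this
    have := hmin' s hs0 habs
    linarith
  · have e1 : Umat H tAB = Umat H t * Umat H t := by
      rw [show tAB = t + t by linarith, Umat_add]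
    have e2 : Umat H tAB b a = Umat H t b c * Umat H t c a := by
      rw [e1]; exact mul_apply_single _ _ _ _ _ colA_t
    have hz : Umat H t b c = 0 := colC_t b (Ne.symm hab)
    rw [e2, hz, zero_mul] at hPST'
    simp at hPST'
  · set s := 2 * t - tAB with hs
    have hs0 : 0 < s := by linarith
    have hslt : s < tAB := by linarith
    have e1 : Umat H (t + t) a a = Umat H t a c * Umat H t c a := by
      rw [Umat_add]; exact mul_apply_single _ _ _ _ _ colA_t
    have e2 : Umat H (t + t) = Umat H s * Umat H tAB := by
      rw [← Umat_add]; congr 1; ring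
    have e3 : Umat H (t + t) a a = Umat H s a b * Umat H tAB b a := by
      rw [e2]; exact mul_apply_single _ _ _ _ _ colA_AB
    have habs : ‖Umat H s a b‖ = 1 := by
      have h4 : ‖Umat H (t + t) a a‖ = 1 := by
        rw [e1, norm_mul, hACabs, hC', one_mul]
      rw [e3, norm_mul, hPST', mul_one] at h4
      exact h4
    have habs' : ‖Umat H s b a‖ = 1 := by
      have hsyS := Umat_symm H hsymm s
      have h5 : Umat H s b a = Umat H s a b := (congrFun (congrFun hsyS b) a).symm
      rw [h5]; exact habs
    have := hmin' s hs0 habs'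
    linarith
end
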